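/- Let ℓ be a prime, let V be a 4-dimensional vector space over 𝔽_ℓ = ℤ/ℓℤ with a nondegenerate alternating bilinear form ω, let q ∈ 𝔽_ℓ be nonzero, and let π : V → V be a linear endomorphism satisfying ω(π x, π y) = q·ω(x, y) for all x, y ∈ V. Suppose K ⊆ V is a 2-dimensional totally isotropic subspace with π(K) ⊆ K, and write the characteristic polynomial of the restriction of π to K as P = X² + cX + d. Then d ≠ 0 and the characteristic polynomial of π equals P·(X² + (cq/d)·X + q²/d), i.e. χ(π) = P·Rec_q(P). (This is the linear-algebraic content of Proposition 'siegel-elkies-charpoly': if f : A → A' is an ℓ-isogeny of principally polarized abelian surfaces over 𝔽_q and P is the characteristic polynomial of Frobenius π_A on ker(f), then χ(A) ≡ P·Rec_q(P) mod ℓ.) -/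

import Mathlib

open Polynomial Matrix

theorem charpoly_fin_two' {R : Type*} [CommRing R] (A : Matrix (Fin 2) (Fin 2) R) :
    A.charpoly = X ^ 2 - C A.trace * X + C A.det := by
  rw [Matrix.charpoly, Matrix.det_fin_two, Matrix.trace_fin_two, Matrix.det_fin_two]
  simp [Matrix.charmatrix_apply_eq, Matrix.charmatrix_apply_ne]
  ring

/-- Linear-algebraic content of Proposition `siegel-elkies-charpoly`:
if `π` is a symplectic similitude of multiplier `q ≠ 0` on a 4-dimensional
symplectic space over `𝔽_ℓ`, and `K` is a 2-dimensional totally isotropic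
`π`-stable subspace on which the characteristic polynomial of `π` is
`P = X² + cX + d`, then `d ≠ 0` and `charpoly π = P · Rec_q(P)`. -/
theorem siegel_elkies_charpoly (ℓ : ℕ) [Fact ℓ.Prime]
    (V : Type*) [AddCommGroup V] [Module (ZMod ℓ) V] [FiniteDimensional (ZMod ℓ) V]
    (hV : Module.finrank (ZMod ℓ) V = 4)
    (ω : V →ₗ[ZMod ℓ] V →ₗ[ZMod ℓ] ZMod ℓ)
    (hAlt : ∀ x : V, ω x x = 0)
    (hNondeg : ∀ x : V, (∀ y : V, ω x y = 0) → x = 0)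
    (q : ZMod ℓ) (hq : q ≠ 0)
    (π : V →ₗ[ZMod ℓ] V)
    (hπ : ∀ x y : V, ω (π x) (π y) = q * ω x y)
    (K : Submodule (ZMod ℓ) V)
    (hK2 : Module.finrank (ZMod ℓ) K = 2)
    (hKiso : ∀ x ∈ K, ∀ y ∈ K, ω x y = 0)
    (hKstab : ∀ x ∈ K, π x ∈ K)
    (c d : ZMod ℓ)
    (hP : (π.restrict hKstab).charpoly = X ^ 2 + C c * X + C d) :
    d ≠ 0 ∧
      π.charpoly =
        (X ^ 2 + C c * X + C d) * (X ^ 2 + C (c * q / d) * X + C (q ^ 2 / d)) := by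
  classical
  -- π is injective
  have hπ0 : ∀ x : V, π x = 0 → x = 0 := by
    intro x hx
    refine hNondeg x fun y => ?_
    have h := hπ x y
    rw [hx] at h
    simp only [map_zero, LinearMap.zero_apply] at h
    exact ((mul_eq_zero.mp h.symm).resolve_left hq)
  have hπinj : Function.Injective π := by
    have hker : LinearMap.ker π = ⊥ := by
      ext x
      simp only [LinearMap.mem_ker, Submodule.mem_bot]
      exact ⟨hπ0 x, fun h => by simp [h]⟩
    exact LinearMap.ker_eq_bot.mp hker
  set A := π.restrict hKstab with hA
  have hAinj : Function.Injective A := by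
    intro x y hxy
    apply Subtype.ext
    apply hπinj
    have := congrArg (Subtype.val) hxy
    simpa [hA, LinearMap.restrict_apply] using this
  -- bases
  let bK : Module.Basis (Fin 2) (ZMod ℓ) K := Module.finBasisOfFinrankEq (ZMod ℓ) K hK2
  obtain ⟨W, hW⟩ := Submodule.exists_isCompl K
  have hWrank : Module.finrank (ZMod ℓ) W = 2 := by
    have h := Submodule.finrank_add_eq_of_isCompl hW
    rw [hK2, hV] at h
    omega
  let bW : Module.Basis (Fin 2) (ZMod ℓ) W := Module.finBasisOfFinrankEq (ZMod ℓ) W hWrank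
  let e : (K × W) ≃ₗ[(ZMod ℓ)] V := Submodule.prodEquivOfIsCompl K W hW
  let b : Module.Basis (Fin 2 ⊕ Fin 2) (ZMod ℓ) V := (bK.prod bW).map e
  set M := LinearMap.toMatrix bK bK A with hM
  let N' : W →ₗ[(ZMod ℓ)] W :=
    (LinearMap.snd (ZMod ℓ) K W) ∘ₗ (e.symm : V →ₗ[(ZMod ℓ)] K × W) ∘ₗ π ∘ₗ W.subtype
  set N := LinearMap.toMatrix bW bW N' with hN
  -- decomposition facts
  have hsum : ∀ x : V, x = ↑(e.symm x).1 + ↑(e.symm x).2 := by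
    intro x
    conv_lhs => rw [← e.apply_symm_apply x]
    exact Submodule.coe_prodEquivOfIsCompl' K W hW _
  have hsymmK : ∀ (k : K), e.symm ↑k = (k, 0) := fun k =>
    Submodule.prodEquivOfIsCompl_symm_apply_left K W hW k
  have hb_inl : ∀ j, b (Sum.inl j) = ↑(bK j) := by
    intro j
    have h1 : (bK.prod bW) (Sum.inl j) = (bK j, (0 : W)) :=
      Prod.ext (bK.prod_apply_inl_fst bW j) (bK.prod_apply_inl_snd bW j)
    rw [show b (Sum.inl j) = e ((bK.prod bW) (Sum.inl j)) from Module.Basis.map_apply _ _ _, h1,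
      Submodule.coe_prodEquivOfIsCompl' K W hW]
    simp
  have hb_inr : ∀ j, b (Sum.inr j) = ↑(bW j) := by
    intro j
    have h1 : (bK.prod bW) (Sum.inr j) = ((0 : K), bW j) :=
      Prod.ext (bK.prod_apply_inr_fst bW j) (bK.prod_apply_inr_snd bW j)
    rw [show b (Sum.inr j) = e ((bK.prod bW) (Sum.inr j)) from Module.Basis.map_apply _ _ _, h1,
      Submodule.coe_prodEquivOfIsCompl' K W hW]
    simp
  have hrepr_inl : ∀ (x : V) i, b.repr x (Sum.inl i) = bK.repr (e.symm x).1 i := by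
    intro x i
    simp [b, Module.Basis.map_repr, Module.Basis.prod_repr_inl]
  have hrepr_inr : ∀ (x : V) i, b.repr x (Sum.inr i) = bW.repr (e.symm x).2 i := by
    intro x i
    simp [b, Module.Basis.map_repr, Module.Basis.prod_repr_inr]
  -- the block decomposition of the matrix of π
  have hblock : LinearMap.toMatrix b b π =
      Matrix.fromBlocks M (Matrix.of fun i j => bK.repr (e.symm (π ↑(bW j))).1 i) 0 N := by
    ext i j
    rcases i with i | i <;> rcases j with j | j
    · rw [LinearMap.toMatrix_apply, hb_inl, Matrix.fromBlocks_apply₁₁, hrepr_inl,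
        hsymmK ⟨π ↑(bK j), hKstab _ (bK j).2⟩]
      simp [hM, LinearMap.toMatrix_apply, hA, LinearMap.restrict_apply]
    · rw [LinearMap.toMatrix_apply, hb_inr, Matrix.fromBlocks_apply₁₂, hrepr_inl]
      rfl
    · rw [LinearMap.toMatrix_apply, hb_inl, Matrix.fromBlocks_apply₂₁, hrepr_inr,
        hsymmK ⟨π ↑(bK j), hKstab _ (bK j).2⟩]
      simp
    · rw [LinearMap.toMatrix_apply, hb_inr, Matrix.fromBlocks_apply₂₂, hrepr_inr]
      simp [hN, LinearMap.toMatrix_apply, N']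
  have hcp : π.charpoly = M.charpoly * N.charpoly := by
    rw [← LinearMap.charpoly_toMatrix (f := π) b, hblock, Matrix.charpoly_fromBlocks_zero₂₁]
  have hMcp : M.charpoly = X ^ 2 + C c * X + C d := by
    rw [hM]
    exact (LinearMap.charpoly_toMatrix (f := A) bK).trans hP
  -- trace and determinant of M
  have h2 : X ^ 2 - C M.trace * X + C M.det = X ^ 2 + C c * X + C d := by
    rw [← charpoly_fin_two', hMcp]
  have htrM : M.trace = -c := by
    have h1 := congrArg (fun p => coeff p 1) h2
    simp [coeff_X_pow] at h1
    linear_combination -h1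
  have hdetM : M.det = d := by
    have h0 := congrArg (fun p => coeff p 0) h2
    simpa [coeff_X_pow] using h0
  have hd : d ≠ 0 := by
    rw [← hdetM]
    intro h0
    have hdA : LinearMap.det A = 0 := by
      rw [← LinearMap.det_toMatrix bK A]
      exact h0
    have hlt := LinearMap.bot_lt_ker_of_det_eq_zero hdA
    rw [LinearMap.ker_eq_bot.mpr hAinj] at hlt
    exact lt_irrefl _ hlt
  -- the orthogonal complement of K is K
  have hRefl : (ω : LinearMap.BilinForm (ZMod ℓ) V).IsRefl := LinearMap.IsAlt.isRefl hAlt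
  have hND : LinearMap.BilinForm.Nondegenerate (R := ZMod ℓ) (M := V) ω := by
    refine hRefl.nondegenerate_iff_separatingLeft.mpr ?_
    intro x hx
    exact hNondeg x hx
  have horthK : LinearMap.BilinForm.orthogonal ω K = K := by
    have hle : K ≤ LinearMap.BilinForm.orthogonal ω K := by
      intro x hx
      intro n hn
      exact hKiso n hn x hx
    refine (Submodule.eq_of_le_of_finrank_le hle ?_).symm
    rw [LinearMap.BilinForm.finrank_orthogonal hND, hV, hK2]
  -- the Gram matrix of the pairing between K and W
  set G : Matrix (Fin 2) (Fin 2) (ZMod ℓ) := Matrix.of (fun i j => ω ↑(bK i) ↑(bW j)) with hG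
  have hGdet : G.det ≠ 0 := by
    intro h0
    obtain ⟨v, hv, hGv⟩ := (Matrix.exists_mulVec_eq_zero_iff).mpr h0
    set w : W := ∑ j, v j • bW j with hw
    have hcol : ∀ i, ω ↑(bK i) ↑w = 0 := by
      intro i
      have h1 : ω ↑(bK i) ↑w = ∑ j, G i j * v j := by
        rw [hw]
        push_cast [Submodule.coe_sum]
        rw [map_sum]
        refine Finset.sum_congr rfl fun j _ => ?_
        rw [_root_.map_smul, smul_eq_mul, mul_comm]
        rfl
      rw [h1]
      have h2 := congrFun hGv i
      simpa [Matrix.mulVec, dotProduct] using h2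
    have hwK : (↑w : V) ∈ K := by
      rw [← horthK]
      intro n hn
      show ω n ↑w = 0
      have hexp : (n : V) = ∑ i, bK.repr ⟨n, hn⟩ i • (↑(bK i) : V) := by
        conv_lhs => rw [show n = ((⟨n, hn⟩ : K) : V) from rfl,
          ← bK.sum_repr ⟨n, hn⟩]
        push_cast [Submodule.coe_sum]
        rfl
      rw [hexp, map_sum, LinearMap.sum_apply]
      refine Finset.sum_eq_zero fun i _ => ?_
      rw [_root_.map_smul, LinearMap.smul_apply, smul_eq_mul, hcol i, mul_zero]
    have hw0 : w = 0 := by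
      have := Submodule.disjoint_def.mp hW.disjoint ↑w hwK w.2
      exact Subtype.ext this
    have hv0 : v = 0 := by
      have hlin := Fintype.linearIndependent_iff.mp bW.linearIndependent v
        (by rw [← hw, hw0])
      funext i
      exact hlin i
    exact hv hv0
  -- expansions of π on basis vectors
  have hKexp : ∀ i, π ↑(bK i) = ∑ s, M s i • (↑(bK s) : V) := by
    intro i
    have h2 : π ↑(bK i) = ↑(A (bK i)) := rfl
    rw [h2]
    have h3 : A (bK i) = ∑ s, M s i • bK s := by
      conv_lhs => rw [← bK.sum_repr (A (bK i))]
      refine Finset.sum_congr rfl fun s _ => ?_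
      rw [hM, LinearMap.toMatrix_apply]
    rw [h3]
    push_cast [Submodule.coe_sum]
    rfl
  have hWexp : ∀ j, π ↑(bW j) = ↑((e.symm (π ↑(bW j))).1) + ∑ t, N t j • (↑(bW t) : V) := by
    intro j
    conv_lhs => rw [hsum (π ↑(bW j))]
    congr 1
    have h1 : (e.symm (π ↑(bW j))).2 = N' (bW j) := rfl
    have h3 : N' (bW j) = ∑ t, N t j • bW t := by
      conv_lhs => rw [← bW.sum_repr (N' (bW j))]
      refine Finset.sum_congr rfl fun t _ => ?_
      rw [hN, LinearMap.toMatrix_apply]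
    rw [h1, h3]
    push_cast [Submodule.coe_sum]
    rfl
  -- the key matrix identity
  have hMGN : Mᵀ * G * N = q • G := by
    ext i j
    have hωexp : ω (π ↑(bK i)) (π ↑(bW j)) = ∑ s, ∑ t, M s i * (N t j * G s t) := by
      rw [hKexp i, hWexp j, map_sum, LinearMap.sum_apply]
      refine Finset.sum_congr rfl fun s _ => ?_
      rw [_root_.map_smul, LinearMap.smul_apply, smul_eq_mul]
      have h0 : ω ↑(bK s) ↑((e.symm (π ↑(bW j))).1) = 0 :=
        hKiso _ (bK s).2 _ ((e.symm (π ↑(bW j))).1).2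
      rw [map_add, map_sum, h0, zero_add, Finset.mul_sum]
      refine Finset.sum_congr rfl fun t _ => ?_
      rw [_root_.map_smul, smul_eq_mul, hG]
      simp only [Matrix.of_apply]
    have hql : ω (π ↑(bK i)) (π ↑(bW j)) = q * G i j := by
      rw [hπ]
      rfl
    have hL : (Mᵀ * G * N) i j = ∑ t, (∑ s, M s i * G s t) * N t j := by
      rw [Matrix.mul_apply]
      refine Finset.sum_congr rfl fun t _ => ?_
      rw [Matrix.mul_apply]
      congr 1
    rw [hL, Matrix.smul_apply, smul_eq_mul, ← hql, hωexp, Finset.sum_comm]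
    refine Finset.sum_congr rfl fun t _ => ?_
    rw [Finset.sum_mul]
    refine Finset.sum_congr rfl fun s _ => ?_
    ring
  -- determinant and trace of N
  have hMTdet : (Mᵀ).det = d := by rw [Matrix.det_transpose, hdetM]
  have hMTunit : IsUnit (Mᵀ).det := isUnit_iff_ne_zero.mpr (by rw [hMTdet]; exact hd)
  have hGunit : IsUnit G.det := isUnit_iff_ne_zero.mpr hGdet
  have hdetN : N.det = q ^ 2 / d := by
    have hdd := congrArg Matrix.det hMGN
    rw [Matrix.det_mul, Matrix.det_mul, Matrix.det_smul, hMTdet] at hdd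
    simp only [Fintype.card_fin] at hdd
    have h1 : G.det * (d * N.det) = G.det * (q ^ 2) := by linear_combination hdd
    have h2 : d * N.det = q ^ 2 := mul_left_cancel₀ hGdet h1
    rw [eq_div_iff hd]
    linear_combination h2
  have hGNeq : G * N = (Mᵀ)⁻¹ * (q • G) := by
    rw [← hMGN, ← Matrix.mul_assoc, ← Matrix.mul_assoc, Matrix.nonsing_inv_mul _ hMTunit,
      Matrix.one_mul]
  have hNeq : N = G⁻¹ * ((Mᵀ)⁻¹ * (q • G)) := by
    rw [← hGNeq, ← Matrix.mul_assoc, Matrix.nonsing_inv_mul _ hGunit, Matrix.one_mul]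
  have htrMinv : (M⁻¹).trace = d⁻¹ * (-c) := by
    rw [Matrix.inv_def, Ring.inverse_eq_inv, Matrix.trace_smul, hdetM, Matrix.adjugate_fin_two,
      smul_eq_mul]
    congr 1
    rw [← htrM, Matrix.trace_fin_two, Matrix.trace_fin_two]
    simp [add_comm]
  have htrN : N.trace = -(c * q / d) := by
    rw [hNeq, Matrix.trace_mul_comm, Matrix.mul_assoc, Matrix.smul_mul,
      Matrix.mul_nonsing_inv _ hGunit, Matrix.mul_smul, Matrix.mul_one, Matrix.trace_smul,
      smul_eq_mul, ← Matrix.transpose_nonsing_inv, Matrix.trace_transpose, htrMinv]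
    rw [div_eq_mul_inv]
    ring
  refine ⟨hd, ?_⟩
  rw [hcp, hMcp, charpoly_fin_two', htrN, hdetN, map_neg, neg_mul, sub_neg_eq_add]
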